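/- Let p, q ∈ (0,1), φ ∈ [0,2π), with either p ≠ q or (p = q and φ ∉ {0,π}). Set μ₁ = √(pq), μ₂ = √((1−p)(1−q)), λ_max = √(μ₁² + μ₂² + 2μ₁μ₂|cos φ|), and for each n define α_n = ((1+(2p−1)^n)/2) a_n² + ((1−(2p−1)^n)/2) b_n², where a_n = |(μ₁ + e^{−iφ}μ₂)^n + (μ₁ − e^{−iφ}μ₂)^n| / √((1+(2p−1)^n)(1+(2q−1)^n)) and b_n = |(μ₁ + e^{−iφ}μ₂)^n − (μ₁ − e^{−iφ}μ₂)^n| / √((1−(2p−1)^n)(1−(2q−1)^n)). For ε ∈ (0,1) let n_ε be the least integer n with α_m ≤ ε for all m ≥ n. Then n_ε / log_{λ_max²}(ε) → 1 as ε → 0, i.e., n_ε = log_{λ_max²}(ε) + o(log_{λ_max²}(ε)). -/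

import Mathlib

open Filter

noncomputable section

/-- a_n = |(μ₁+e^{−iφ}μ₂)^n + (μ₁−e^{−iφ}μ₂)^n| / √((1+Δp^n)(1+Δq^n)), the modulus of
the overlap ⟨0_q|0_p⟩ of the normalized even-parity components. -/
def aSeq (p q φ : ℝ) (n : ℕ) : ℝ :=
  ‖(((Real.sqrt (p * q) : ℂ) +
      Complex.exp (-(Complex.I * φ)) * (Real.sqrt ((1 - p) * (1 - q)) : ℂ)) ^ n +
    ((Real.sqrt (p * q) : ℂ) -
      Complex.exp (-(Complex.I * φ)) * (Real.sqrt ((1 - p) * (1 - q)) : ℂ)) ^ n)‖ /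
  Real.sqrt ((1 + (2 * p - 1) ^ n) * (1 + (2 * q - 1) ^ n))

/-- b_n = |(μ₁+e^{−iφ}μ₂)^n − (μ₁−e^{−iφ}μ₂)^n| / √((1−Δp^n)(1−Δq^n)), the modulus of
the overlap ⟨1_q|1_p⟩ of the normalized odd-parity components. -/
def bSeq (p q φ : ℝ) (n : ℕ) : ℝ :=
  ‖(((Real.sqrt (p * q) : ℂ) +
      Complex.exp (-(Complex.I * φ)) * (Real.sqrt ((1 - p) * (1 - q)) : ℂ)) ^ n -
    ((Real.sqrt (p * q) : ℂ) -
      Complex.exp (-(Complex.I * φ)) * (Real.sqrt ((1 - p) * (1 - q)) : ℂ)) ^ n)‖ /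
  Real.sqrt ((1 - (2 * p - 1) ^ n) * (1 - (2 * q - 1) ^ n))

/-- α_n = ((1+Δp^n)/2) a_n² + ((1−Δp^n)/2) b_n²: the type-I error probability of the
optimal ℤ₂-invariant binary POVM (whose type-II error probability is 0) for testing
n copies of √p|0⟩+√(1-p)|1⟩ against √q|0⟩+e^{iφ}√(1-q)|1⟩. -/
def typeIError (p q φ : ℝ) (n : ℕ) : ℝ :=
  (1 + (2 * p - 1) ^ n) / 2 * aSeq p q φ n ^ 2 + (1 - (2 * p - 1) ^ n) / 2 * bSeq p q φ n ^ 2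

/-- λ_max = √(μ₁² + μ₂² + 2μ₁μ₂|cos φ|), μ₁ = √(pq), μ₂ = √((1−p)(1−q)). -/
def lamMax (p q φ : ℝ) : ℝ :=
  Real.sqrt (Real.sqrt (p * q) ^ 2 + Real.sqrt ((1 - p) * (1 - q)) ^ 2 +
    2 * Real.sqrt (p * q) * Real.sqrt ((1 - p) * (1 - q)) * |Real.cos φ|)

/-- n_ε: the least n such that α_m ≤ ε for all m ≥ n. -/
def nCrit (p q φ ε : ℝ) : ℕ := sInf {n : ℕ | ∀ m : ℕ, n ≤ m → typeIError p q φ m ≤ ε}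

lemma absSqAdd (μ₁ μ₂ φ : ℝ) :
    ‖(μ₁:ℂ) + Complex.exp (-(Complex.I*φ)) * (μ₂:ℂ)‖ ^ 2
      = μ₁^2 + μ₂^2 + 2*μ₁*μ₂*Real.cos φ := by
  rw [Complex.sq_norm, Complex.normSq_apply]
  have h : -(Complex.I*(φ:ℂ)) = ((-φ : ℝ):ℂ) * Complex.I := by push_cast; ring
  rw [h, Complex.exp_mul_I]
  simp [Complex.add_re, Complex.add_im, Complex.mul_re, Complex.mul_im,
    Complex.cos_ofReal_re, Complex.sin_ofReal_re]
  nlinarith [Real.sin_sq_add_cos_sq φ]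

lemma absSqSub (μ₁ μ₂ φ : ℝ) :
    ‖(μ₁:ℂ) - Complex.exp (-(Complex.I*φ)) * (μ₂:ℂ)‖ ^ 2
      = μ₁^2 + μ₂^2 - 2*μ₁*μ₂*Real.cos φ := by
  rw [Complex.sq_norm, Complex.normSq_apply]
  have h : -(Complex.I*(φ:ℂ)) = ((-φ : ℝ):ℂ) * Complex.I := by push_cast; ring
  rw [h, Complex.exp_mul_I]
  simp [Complex.sub_re, Complex.sub_im, Complex.mul_re, Complex.mul_im,
    Complex.cos_ofReal_re, Complex.sin_ofReal_re]
  nlinarith [Real.sin_sq_add_cos_sq φ]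

lemma parallelogramC (x y : ℂ) :
    ‖x+y‖^2 + ‖x-y‖^2 = 2*(‖x‖^2 + ‖y‖^2) := by
  nlinarith [parallelogram_law_with_norm ℂ x y]

set_option maxHeartbeats 1000000 in
lemma sandwich (p q φ : ℝ) (hp : p ∈ Set.Ioo (0:ℝ) 1) (hq : q ∈ Set.Ioo (0:ℝ) 1) :
    ∃ C : ℝ, 2 ≤ C ∧ ∀ n : ℕ,
      (lamMax p q φ ^ 2) ^ n / 2 ≤ typeIError p q φ n ∧
      typeIError p q φ n ≤ C * (lamMax p q φ ^ 2) ^ n := by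
  obtain ⟨hp0, hp1⟩ := hp
  obtain ⟨hq0, hq1⟩ := hq
  set μ₁ := Real.sqrt (p*q) with hμ₁def
  set μ₂ := Real.sqrt ((1-p)*(1-q)) with hμ₂def
  have hμ₁ : 0 ≤ μ₁ := Real.sqrt_nonneg _
  have hμ₂ : 0 ≤ μ₂ := Real.sqrt_nonneg _
  set K := lamMax p q φ ^ 2 with hKdef0
  have hKdef : K = μ₁^2 + μ₂^2 + 2*μ₁*μ₂*|Real.cos φ| := by
    rw [hKdef0, lamMax, Real.sq_sqrt (by positivity)]
  have hK0 : 0 ≤ K := by rw [hKdef]; positivity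
  set zp : ℂ := (μ₁:ℂ) + Complex.exp (-(Complex.I*φ)) * (μ₂:ℂ) with hzpdef
  set zm : ℂ := (μ₁:ℂ) - Complex.exp (-(Complex.I*φ)) * (μ₂:ℂ) with hzmdef
  have habsp : ‖zp‖ ^ 2 = μ₁^2 + μ₂^2 + 2*μ₁*μ₂*Real.cos φ := absSqAdd μ₁ μ₂ φ
  have habsm : ‖zm‖ ^ 2 = μ₁^2 + μ₂^2 - 2*μ₁*μ₂*Real.cos φ := absSqSub μ₁ μ₂ φ
  have hpK : ‖zp‖ ^ 2 ≤ K := by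
    rw [habsp, hKdef]
    nlinarith [le_abs_self (Real.cos φ), mul_nonneg hμ₁ hμ₂]
  have hmK : ‖zm‖ ^ 2 ≤ K := by
    rw [habsm, hKdef]
    nlinarith [neg_abs_le (Real.cos φ), mul_nonneg hμ₁ hμ₂]
  have hKor : K = ‖zp‖ ^ 2 ∨ K = ‖zm‖ ^ 2 := by
    rcases le_or_gt 0 (Real.cos φ) with h | h
    · left; rw [habsp, hKdef, abs_of_nonneg h]
    · right; rw [habsm, hKdef, abs_of_neg h]; ring
  set d := 1 - |2*q-1| with hddef
  have hqabs : |2*q-1| < 1 := by rw [abs_lt]; constructor <;> linarith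
  have hd0 : 0 < d := by simp only [hddef]; linarith
  have hd1 : d ≤ 1 := by have := abs_nonneg (2*q-1); simp only [hddef]; linarith
  refine ⟨2/d, by rw [le_div_iff₀ hd0]; linarith, fun n => ?_⟩
  have hsum_le : (‖zp‖ ^ 2)^n + (‖zm‖ ^ 2)^n ≤ 2*K^n := by
    have h1 := pow_le_pow_left₀ (by positivity) hpK n
    have h2 := pow_le_pow_left₀ (by positivity) hmK n
    linarith
  have hsum_ge : K^n ≤ (‖zp‖ ^ 2)^n + (‖zm‖ ^ 2)^n := by
    rcases hKor with h | h
    · rw [h]; nlinarith [pow_nonneg (sq_nonneg (‖zm‖)) n]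
    · rw [h]; nlinarith [pow_nonneg (sq_nonneg (‖zp‖)) n]
  rcases Nat.eq_zero_or_pos n with rfl | hn
  · have hα : typeIError p q φ 0 = 1 := by
      simp only [typeIError, aSeq, bSeq, pow_zero]
      rw [show ((1:ℝ)+1)*(1+1) = 2^2 by norm_num, Real.sqrt_sq (by norm_num)]
      norm_num
    rw [hα, pow_zero]
    constructor
    · norm_num
    · rw [mul_one, le_div_iff₀ hd0]; linarith
  · -- n ≥ 1
    set Pn := (2*p-1)^n with hPndef
    set Qn := (2*q-1)^n with hQndef
    have hpabs : |2*p-1| < 1 := by rw [abs_lt]; constructor <;> linarith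
    have hPabs : |Pn| < 1 := by
      rw [hPndef, abs_pow]
      exact pow_lt_one₀ (abs_nonneg _) hpabs (Nat.pos_iff_ne_zero.mp hn)
    have hQabs : |Qn| ≤ |2*q-1| := by
      rw [hQndef, abs_pow]
      calc |2*q-1|^n ≤ |2*q-1|^1 :=
            pow_le_pow_of_le_one (abs_nonneg _) hqabs.le hn
        _ = |2*q-1| := pow_one _
    have h1p : 0 < 1 + Pn := by have := abs_lt.mp hPabs; linarith [this.1]
    have h2p : 0 < 1 - Pn := by have := abs_lt.mp hPabs; linarith [this.2]
    have hQl := abs_le.mp hQabs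
    have h1q : d ≤ 1 + Qn := by simp only [hddef]; linarith [hQl.1]
    have h1q2 : 1 + Qn ≤ 2 := by have := abs_nonneg (2*q-1); linarith [hQl.2]
    have h2q : d ≤ 1 - Qn := by simp only [hddef]; linarith [hQl.2]
    have h2q2 : 1 - Qn ≤ 2 := by have := abs_nonneg (2*q-1); linarith [hQl.1]
    have h1q0 : 0 < 1 + Qn := lt_of_lt_of_le hd0 h1q
    have h2q0 : 0 < 1 - Qn := lt_of_lt_of_le hd0 h2q
    have haS : aSeq p q φ n = ‖zp^n + zm^n‖ / Real.sqrt ((1+Pn)*(1+Qn)) := rfl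
    have hbS : bSeq p q φ n = ‖zp^n - zm^n‖ / Real.sqrt ((1-Pn)*(1-Qn)) := rfl
    set A := ‖zp^n + zm^n‖ with hAdef
    set B := ‖zp^n - zm^n‖ with hBdef
    have hA0 : 0 ≤ A := norm_nonneg _
    have hB0 : 0 ≤ B := norm_nonneg _
    have ha2 : aSeq p q φ n ^ 2 = A^2 / ((1+Pn)*(1+Qn)) := by
      rw [haS, div_pow, Real.sq_sqrt (by positivity)]
    have hb2 : bSeq p q φ n ^ 2 = B^2 / ((1-Pn)*(1-Qn)) := by
      rw [hbS, div_pow, Real.sq_sqrt (by positivity)]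
    have e1 : (1+Pn)/2 * (A^2/((1+Pn)*(1+Qn))) = A^2/(2*(1+Qn)) := by
      rw [div_mul_div_comm, div_eq_div_iff (by positivity) (by positivity)]
      ring
    have e2 : (1-Pn)/2 * (B^2/((1-Pn)*(1-Qn))) = B^2/(2*(1-Qn)) := by
      rw [div_mul_div_comm, div_eq_div_iff (by positivity) (by positivity)]
      ring
    have htot : typeIError p q φ n = A^2/(2*(1+Qn)) + B^2/(2*(1-Qn)) := by
      rw [typeIError, ha2, hb2, e1, e2]
    have hpar : A^2 + B^2 = 2*((‖zp‖ ^ 2)^n + (‖zm‖ ^ 2)^n) := by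
      rw [hAdef, hBdef, parallelogramC, norm_pow, norm_pow, ← pow_mul, ← pow_mul,
        ← pow_mul', ← pow_mul']
    constructor
    · -- lower bound
      rw [htot]
      have l1 : A^2/4 ≤ A^2/(2*(1+Qn)) := by
        apply div_le_div_of_nonneg_left (by positivity) (by linarith) (by linarith)
      have l2 : B^2/4 ≤ B^2/(2*(1-Qn)) := by
        apply div_le_div_of_nonneg_left (by positivity) (by linarith) (by linarith)
      have : K^n/2 ≤ A^2/4 + B^2/4 := by
        rw [← add_div]
        rw [hpar] at *
        linarith [hsum_ge]
      linarith
    · -- upper bound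
      rw [htot]
      have l1 : A^2/(2*(1+Qn)) ≤ A^2/(2*d) := by
        apply div_le_div_of_nonneg_left (by positivity) (by linarith) (by linarith)
      have l2 : B^2/(2*(1-Qn)) ≤ B^2/(2*d) := by
        apply div_le_div_of_nonneg_left (by positivity) (by linarith) (by linarith)
      have : A^2/(2*d) + B^2/(2*d) ≤ 2/d * K^n := by
        rw [← add_div, hpar]
        rw [div_le_iff₀ (by positivity)]
        have : 2 / d * K ^ n * (2 * d) = 4 * K^n := by field_simp; ring
        rw [this]
        linarith [hsum_le]
      linarith

lemma K_pos (p q φ : ℝ) (hp : p ∈ Set.Ioo (0:ℝ) 1) (hq : q ∈ Set.Ioo (0:ℝ) 1) :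
    0 < lamMax p q φ ^ 2 := by
  obtain ⟨hp0, hp1⟩ := hp; obtain ⟨hq0, hq1⟩ := hq
  have h1 : 0 < Real.sqrt (p*q) := Real.sqrt_pos.mpr (by positivity)
  rw [lamMax, Real.sq_sqrt (by positivity)]
  have h2 : 0 ≤ Real.sqrt ((1-p)*(1-q)) := Real.sqrt_nonneg _
  nlinarith [abs_nonneg (Real.cos φ), mul_nonneg (mul_nonneg h1.le h2) (abs_nonneg (Real.cos φ))]

lemma K_lt_one (p q φ : ℝ) (hp : p ∈ Set.Ioo (0:ℝ) 1) (hq : q ∈ Set.Ioo (0:ℝ) 1)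
    (hφ : φ ∈ Set.Ico (0 : ℝ) (2 * Real.pi))
    (h : p ≠ q ∨ (p = q ∧ φ ≠ 0 ∧ φ ≠ Real.pi)) :
    lamMax p q φ ^ 2 < 1 := by
  obtain ⟨hp0, hp1⟩ := hp; obtain ⟨hq0, hq1⟩ := hq
  rw [lamMax, Real.sq_sqrt (by positivity)]
  set μ₁ := Real.sqrt (p*q) with hμ₁def
  set μ₂ := Real.sqrt ((1-p)*(1-q)) with hμ₂def
  have hμ₁sq : μ₁^2 = p*q := Real.sq_sqrt (by positivity)
  have hμ₂sq : μ₂^2 = (1-p)*(1-q) := Real.sq_sqrt (mul_nonneg (by linarith) (by linarith))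
  have key : 2*μ₁*μ₂*|Real.cos φ| < p*(1-q) + q*(1-p) := by
    rcases h with hpq | ⟨rfl, hφ0, hφπ⟩
    · set u := Real.sqrt (p*(1-q)) with hudef
      set v := Real.sqrt (q*(1-p)) with hvdef
      have hu : u^2 = p*(1-q) := Real.sq_sqrt (mul_nonneg hp0.le (by linarith))
      have hv : v^2 = q*(1-p) := Real.sq_sqrt (mul_nonneg hq0.le (by linarith))
      have huv : μ₁*μ₂ = u*v := by
        rw [hμ₁def, hμ₂def, hudef, hvdef,
          ← Real.sqrt_mul (mul_nonneg hp0.le hq0.le),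
          ← Real.sqrt_mul (mul_nonneg hp0.le (by linarith))]
        congr 1; ring
      have hne : u ≠ v := by
        intro hEq
        apply hpq
        have : p*(1-q) = q*(1-p) := by rw [← hu, ← hv, hEq]
        nlinarith
      have h0 : 0 < (u-v)^2 :=
        lt_of_le_of_ne (sq_nonneg _) (Ne.symm (pow_ne_zero 2 (sub_ne_zero.mpr hne)))
      have hμprod : 0 ≤ μ₁*μ₂ := mul_nonneg (Real.sqrt_nonneg _) (Real.sqrt_nonneg _)
      nlinarith [Real.abs_cos_le_one φ, abs_nonneg (Real.cos φ)]
    · -- p = q case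
      have hμ₁ : μ₁ = p := by rw [hμ₁def, Real.sqrt_mul_self hp0.le]
      have hμ₂ : μ₂ = 1-p := by rw [hμ₂def, Real.sqrt_mul_self (by linarith)]
      have hπ := Real.pi_pos
      have hc1 : Real.cos φ < 1 := by
        refine lt_of_le_of_ne (Real.cos_le_one φ) (fun hEq => hφ0 ?_)
        exact (Real.cos_eq_one_iff_of_lt_of_lt (by linarith [hφ.1]) hφ.2).mp hEq
      have hc2 : -1 < Real.cos φ := by
        rcases lt_or_eq_of_le (Real.neg_one_le_cos φ) with h | h
        · exact h
        · exfalso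
          apply hφπ
          have hcos : Real.cos (φ - Real.pi) = 1 := by
            rw [Real.cos_sub_pi, ← h]; ring
          have := (Real.cos_eq_one_iff_of_lt_of_lt (x := φ - Real.pi)
            (by linarith [hφ.1]) (by linarith [hφ.2])).mp hcos
          linarith
      have hc : |Real.cos φ| < 1 := abs_lt.mpr ⟨hc2, hc1⟩
      rw [hμ₁, hμ₂]
      have hpp : 0 < p*(1-p) := mul_pos hp0 (by linarith)
      nlinarith
  nlinarith [key, hμ₁sq, hμ₂sq]

lemma limit_aux (αe : ℕ → ℝ) (K C : ℝ) (hK0 : 0 < K) (hK1 : K < 1) (hC2 : 2 ≤ C)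
    (hsand : ∀ n : ℕ, K ^ n / 2 ≤ αe n ∧ αe n ≤ C * K ^ n) :
    Filter.Tendsto
      (fun ε : ℝ => ((sInf {n : ℕ | ∀ m : ℕ, n ≤ m → αe m ≤ ε} : ℕ) : ℝ) / (Real.log ε / Real.log K))
      (nhdsWithin 0 (Set.Ioi 0)) (nhds 1) := by
  set L := Real.log K with hL
  have hLneg : L < 0 := Real.log_neg hK0 hK1
  have hLne : L ≠ 0 := ne_of_lt hLneg
  have hC0 : (0:ℝ) < C := by linarith
  have hlogC : 0 < Real.log C := Real.log_pos (by linarith)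
  have hlog2 : 0 < Real.log 2 := Real.log_pos (by norm_num)
  have hmem : ∀ ε : ℝ, 0 < ε → ∀ m : ℕ, (Real.log ε - Real.log C)/L ≤ (m:ℝ) →
      αe m ≤ ε := by
    intro ε hε m hm
    refine le_trans (hsand m).2 ?_
    have h1 : (m:ℝ) * L ≤ Real.log ε - Real.log C := by
      have h2 := mul_le_mul_of_nonpos_right hm (le_of_lt hLneg)
      rwa [div_mul_cancel₀ _ hLne] at h2
    calc C * K ^ m = Real.exp (Real.log C + m*L) := by
          rw [Real.exp_add, Real.exp_log hC0, hL, ← Real.log_pow, Real.exp_log (pow_pos hK0 m)]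
      _ ≤ Real.exp (Real.log ε) := Real.exp_le_exp.mpr (by linarith)
      _ = ε := Real.exp_log hε
  have hne : ∀ ε : ℝ, 0 < ε → {n : ℕ | ∀ m : ℕ, n ≤ m → αe m ≤ ε}.Nonempty := by
    intro ε hε
    refine ⟨⌈(Real.log ε - Real.log C)/L⌉₊, fun m hm => hmem ε hε m ?_⟩
    exact le_trans (Nat.le_ceil _) (by exact_mod_cast hm)
  have keydiv : ∀ a : ℝ, Tendsto (fun ε : ℝ => a / Real.log ε) (nhdsWithin 0 (Set.Ioi 0)) (nhds 0) := by
    intro a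
    have h1 : Tendsto (fun ε : ℝ => -Real.log ε) (nhdsWithin 0 (Set.Ioi 0)) atTop :=
      tendsto_neg_atBot_atTop.comp Real.tendsto_log_nhdsGT_zero
    have h2 := Filter.Tendsto.div_atTop (tendsto_const_nhds (x := a)) h1
    have h3 := h2.neg
    simp only [div_neg, neg_neg, neg_zero] at h3
    exact h3
  apply tendsto_of_tendsto_of_tendsto_of_le_of_le'
    (g := fun ε : ℝ => 1 + Real.log 2 / Real.log ε)
    (h := fun ε : ℝ => 1 + (L - Real.log C) / Real.log ε)
  · simpa using (keydiv (Real.log 2)).const_add 1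
  · simpa using (keydiv (L - Real.log C)).const_add 1
  · -- lower bound eventually
    filter_upwards [Ioo_mem_nhdsGT_of_mem (Set.left_mem_Ico.mpr (by positivity : (0:ℝ) < min 1 C))]
      with ε hε
    obtain ⟨hε0, hεδ⟩ := hε
    have hε1 : ε < 1 := lt_of_lt_of_le hεδ (min_le_left _ _)
    have hlε : Real.log ε < 0 := Real.log_neg hε0 hε1
    have hlεne : Real.log ε ≠ 0 := ne_of_lt hlε
    have hD : 0 < Real.log ε / L := div_pos_of_neg_of_neg hlε hLneg
    set nε := sInf {n : ℕ | ∀ m : ℕ, n ≤ m → αe m ≤ ε} with hnε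
    have hinf := Nat.sInf_mem (hne ε hε0)
    have hαn : αe nε ≤ ε := hinf nε le_rfl
    have hKn : K ^ nε ≤ 2 * ε := by linarith [(hsand nε).1]
    have hlow : (Real.log ε + Real.log 2)/L ≤ (nε:ℝ) := by
      rw [div_le_iff_of_neg hLneg]
      have h1 : Real.log (K ^ nε) ≤ Real.log (2*ε) :=
        Real.log_le_log (pow_pos hK0 nε) hKn
      rw [Real.log_pow, Real.log_mul (by norm_num) (ne_of_gt hε0)] at h1
      calc (nε:ℝ) * L = nε * Real.log K := by rw [hL]
        _ ≤ Real.log 2 + Real.log ε := h1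
        _ = Real.log ε + Real.log 2 := by ring
    have heq : 1 + Real.log 2 / Real.log ε
        = ((Real.log ε + Real.log 2)/L)/(Real.log ε/L) := by
      field_simp
    rw [heq]
    gcongr
  · -- upper bound eventually
    filter_upwards [Ioo_mem_nhdsGT_of_mem (Set.left_mem_Ico.mpr (by positivity : (0:ℝ) < min 1 C))]
      with ε hε
    obtain ⟨hε0, hεδ⟩ := hε
    have hε1 : ε < 1 := lt_of_lt_of_le hεδ (min_le_left _ _)
    have hlε : Real.log ε < 0 := Real.log_neg hε0 hε1
    have hlεne : Real.log ε ≠ 0 := ne_of_lt hlε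
    have hD : 0 < Real.log ε / L := div_pos_of_neg_of_neg hlε hLneg
    set x := (Real.log ε - Real.log C)/L with hx
    have hx0 : 0 < x := div_pos_of_neg_of_neg (by linarith) hLneg
    set nε := sInf {n : ℕ | ∀ m : ℕ, n ≤ m → αe m ≤ ε} with hnε
    have h1 : nε ≤ ⌈x⌉₊ :=
      Nat.sInf_le (fun m hm => hmem ε hε0 m (le_trans (Nat.le_ceil x) (by exact_mod_cast hm)))
    have h2 : (nε:ℝ) ≤ x + 1 :=
      le_trans (by exact_mod_cast h1) (Nat.ceil_lt_add_one hx0.le).le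
    have heq : 1 + (L - Real.log C) / Real.log ε = (x + 1)/(Real.log ε/L) := by
      rw [hx]; field_simp; ring
    rw [heq]
    gcongr

/-- If p ≠ q, or p = q and φ ∉ {0, π}, then the critical number of
copies satisfies n_ε / log_{λ_max²}(ε) → 1 as ε → 0⁺, i.e.
n_ε = log_{λ_max²}(ε) + o(log_{λ_max²}(ε)). -/
theorem critical_copies_asymptotics (p q φ : ℝ) (hp : p ∈ Set.Ioo (0 : ℝ) 1)
    (hq : q ∈ Set.Ioo (0 : ℝ) 1) (hφ : φ ∈ Set.Ico (0 : ℝ) (2 * Real.pi))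
    (h : p ≠ q ∨ (p = q ∧ φ ≠ 0 ∧ φ ≠ Real.pi)) :
    Filter.Tendsto
      (fun ε : ℝ => (nCrit p q φ ε : ℝ) / (Real.log ε / Real.log (lamMax p q φ ^ 2)))
      (nhdsWithin 0 (Set.Ioi 0)) (nhds 1) := by
  obtain ⟨C, hC2, hsand⟩ := sandwich p q φ hp hq
  exact limit_aux (typeIError p q φ) (lamMax p q φ ^ 2) C (K_pos p q φ hp hq)
    (K_lt_one p q φ hp hq hφ h) hC2 hsand
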